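/- Let A, Q, X_0, X_1, ..., X_{n-1}, Y_0, Y_1, ..., Y_{n-1} be discrete random variables such that for each i ∈ {0, ..., n-1}: H(X_i | A, Q, X_0, ..., X_{i-1}, Y_0, ..., Y_i) = 0 and X_i is independent of (Q, X_0, ..., X_{i-1}, Y_0, ..., Y_i). Then H(A) ≥ Σ_{i=0}^{n-1} H(X_i). -/

import Mathlib

open scoped BigOperators

/-- Probability that the discrete random variable `X` (on a finite probability
space with weights `μ`) takes the value `a`. -/
noncomputable def pr {Ω α : Type*} [Fintype Ω] (μ : Ω → ℝ) [DecidableEq α]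
    (X : Ω → α) (a : α) : ℝ :=
  ∑ ω, if X ω = a then μ ω else 0

/-- Shannon entropy (in bits) of the discrete random variable `X`. -/
noncomputable def entH {Ω α : Type*} [Fintype Ω] [Fintype α] [DecidableEq α]
    (μ : Ω → ℝ) (X : Ω → α) : ℝ :=
  -∑ a, pr μ X a * Real.logb 2 (pr μ X a)

/-- Conditional Shannon entropy `H(X | Y) = H(X, Y) - H(Y)`. -/
noncomputable def condH {Ω α β : Type*} [Fintype Ω] [Fintype α] [DecidableEq α]
    [Fintype β] [DecidableEq β] (μ : Ω → ℝ) (X : Ω → α) (Y : Ω → β) : ℝ :=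
  entH μ (fun ω => (X ω, Y ω)) - entH μ Y

/-- `X` and `Y` are independent random variables. -/
def IndepRV {Ω α β : Type*} [Fintype Ω] [DecidableEq α] [DecidableEq β]
    (μ : Ω → ℝ) (X : Ω → α) (Y : Ω → β) : Prop :=
  ∀ a b, pr μ (fun ω => (X ω, Y ω)) (a, b) = pr μ X a * pr μ Y b

/-- `μ` is a probability mass function on the finite sample space `Ω`. -/
def IsPMF {Ω : Type*} [Fintype Ω] (μ : Ω → ℝ) : Prop :=
  (∀ ω, 0 ≤ μ ω) ∧ ∑ ω, μ ω = 1

set_option linter.unusedSectionVars false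
set_option maxHeartbeats 1000000

section Lemmas
variable {Ω : Type*} [Fintype Ω] {μ : Ω → ℝ}

lemma pr_nonneg (hμ : IsPMF μ) {α : Type*} [DecidableEq α] (X : Ω → α) (a : α) :
    0 ≤ pr μ X a := by
  apply Finset.sum_nonneg
  intro ω _
  split <;> simp [hμ.1 ω]

lemma pr_sum (hμ : IsPMF μ) {α : Type*} [Fintype α] [DecidableEq α] (X : Ω → α) :
    ∑ a, pr μ X a = 1 := by
  unfold pr
  rw [Finset.sum_comm]
  simpa using hμ.2

lemma pr_le_one (hμ : IsPMF μ) {α : Type*} [Fintype α] [DecidableEq α] (X : Ω → α) (a : α) :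
    pr μ X a ≤ 1 := by
  rw [← pr_sum hμ X]
  exact Finset.single_le_sum (fun b _ => pr_nonneg hμ X b) (Finset.mem_univ a)

lemma entH_nonneg (hμ : IsPMF μ) {α : Type*} [Fintype α] [DecidableEq α] (X : Ω → α) :
    0 ≤ entH μ X := by
  unfold entH
  rw [neg_nonneg]
  apply Finset.sum_nonpos
  intro a _
  rcases eq_or_lt_of_le (pr_nonneg hμ X a) with h | h
  · simp [← h]
  · apply mul_nonpos_of_nonneg_of_nonpos (le_of_lt h)
    exact Real.logb_nonpos (by norm_num) (le_of_lt h) (pr_le_one hμ X a)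

-- marginals for pairs
lemma pr_pair_snd {α β : Type*} [Fintype α] [DecidableEq α] [DecidableEq β]
    (X : Ω → α) (W : Ω → β) (b : β) :
    ∑ a, pr μ (fun ω => (X ω, W ω)) (a, b) = pr μ W b := by
  unfold pr
  rw [Finset.sum_comm]
  apply Finset.sum_congr rfl
  intro ω _
  simp [Prod.ext_iff, Finset.sum_ite_eq, ite_and]

lemma pr_pair_fst {α β : Type*} [DecidableEq α] [Fintype β] [DecidableEq β]
    (X : Ω → α) (W : Ω → β) (a : α) :
    ∑ b, pr μ (fun ω => (X ω, W ω)) (a, b) = pr μ X a := by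
  unfold pr
  rw [Finset.sum_comm]
  apply Finset.sum_congr rfl
  intro ω _
  simp [Prod.ext_iff, Finset.sum_ite_eq, ite_and]

lemma pr_pair_le_snd (hμ : IsPMF μ) {α β : Type*} [Fintype α] [DecidableEq α] [DecidableEq β]
    (X : Ω → α) (W : Ω → β) (a : α) (b : β) :
    pr μ (fun ω => (X ω, W ω)) (a, b) ≤ pr μ W b := by
  rw [← pr_pair_snd X W b]
  exact Finset.single_le_sum (f := fun c => pr μ (fun ω => (X ω, W ω)) (c, b)) (fun c _ => pr_nonneg hμ _ _) (Finset.mem_univ a)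

lemma pr_pair_le_fst (hμ : IsPMF μ) {α β : Type*} [DecidableEq α] [Fintype β] [DecidableEq β]
    (X : Ω → α) (W : Ω → β) (a : α) (b : β) :
    pr μ (fun ω => (X ω, W ω)) (a, b) ≤ pr μ X a := by
  rw [← pr_pair_fst X W a]
  exact Finset.single_le_sum (f := fun c => pr μ (fun ω => (X ω, W ω)) (a, c)) (fun c _ => pr_nonneg hμ _ _) (Finset.mem_univ b)


lemma logb_two_pos : (0:ℝ) < Real.log 2 := Real.log_pos (by norm_num)

/-- Gibbs' inequality core. -/
lemma gibbs {ι : Type*} [Fintype ι] (p q : ι → ℝ) (hp : ∀ i, 0 ≤ p i)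
    (hq : ∀ i, 0 ≤ q i) (hpq : ∀ i, p i ≠ 0 → q i ≠ 0)
    (hsum : ∑ i, q i ≤ ∑ i, p i) :
    ∑ i, p i * Real.logb 2 (q i) ≤ ∑ i, p i * Real.logb 2 (p i) := by
  have key : ∀ i, p i * Real.logb 2 (q i) - p i * Real.logb 2 (p i)
      ≤ (q i - p i) / Real.log 2 := by
    intro i
    rcases eq_or_lt_of_le (hp i) with h0 | h0
    · rw [← h0]
      simpa using div_nonneg (hq i) logb_two_pos.le
    · have hqi : 0 < q i := lt_of_le_of_ne (hq i) (Ne.symm (hpq i (ne_of_gt h0)))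
      have : Real.logb 2 (q i) - Real.logb 2 (p i) = Real.log (q i / p i) / Real.log 2 := by
        rw [Real.log_div (ne_of_gt hqi) (ne_of_gt h0)]
        unfold Real.logb
        ring
      have hlog : Real.log (q i / p i) ≤ q i / p i - 1 :=
        Real.log_le_sub_one_of_pos (div_pos hqi h0)
      calc p i * Real.logb 2 (q i) - p i * Real.logb 2 (p i)
          = p i * (Real.log (q i / p i) / Real.log 2) := by rw [← this]; ring
        _ ≤ p i * ((q i / p i - 1) / Real.log 2) := by
            apply mul_le_mul_of_nonneg_left _ h0.le
            exact div_le_div_of_nonneg_right hlog logb_two_pos.le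
        _ = (q i - p i) / Real.log 2 := by
            field_simp
    
  have := Finset.sum_le_sum (fun i (_ : i ∈ Finset.univ) => key i)
  rw [Finset.sum_sub_distrib] at this
  have h2 : ∑ i, (q i - p i) / Real.log 2 = (∑ i, q i - ∑ i, p i) / Real.log 2 := by
    rw [← Finset.sum_div, Finset.sum_sub_distrib]
  rw [h2] at this
  have h3 : (∑ i, q i - ∑ i, p i) / Real.log 2 ≤ 0 :=
    div_nonpos_of_nonpos_of_nonneg (by linarith) logb_two_pos.le
  linarith

lemma sum_pair_weight_snd {α β : Type*} [Fintype α] [DecidableEq α] [Fintype β] [DecidableEq β]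
    (X : Ω → α) (W : Ω → β) (L : β → ℝ) :
    ∑ ab : α × β, pr μ (fun ω => (X ω, W ω)) ab * L ab.2 = ∑ b, pr μ W b * L b := by
  rw [Fintype.sum_prod_type, Finset.sum_comm]
  apply Finset.sum_congr rfl
  intro b _
  show ∑ x, pr μ (fun ω => (X ω, W ω)) (x, b) * L b = _
  rw [← Finset.sum_mul, pr_pair_snd]

lemma sum_pair_weight_fst {α β : Type*} [Fintype α] [DecidableEq α] [Fintype β] [DecidableEq β]
    (X : Ω → α) (W : Ω → β) (L : α → ℝ) :
    ∑ ab : α × β, pr μ (fun ω => (X ω, W ω)) ab * L ab.1 = ∑ a, pr μ X a * L a := by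
  rw [Fintype.sum_prod_type]
  apply Finset.sum_congr rfl
  intro a _
  show ∑ y, pr μ (fun ω => (X ω, W ω)) (a, y) * L a = _
  rw [← Finset.sum_mul, pr_pair_fst]

/-- `H(X,W) ≥ H(W)`, i.e. conditional entropy is nonnegative. -/
lemma entH_pair_ge_snd (hμ : IsPMF μ) {α β : Type*} [Fintype α] [DecidableEq α]
    [Fintype β] [DecidableEq β] (X : Ω → α) (W : Ω → β) :
    entH μ W ≤ entH μ (fun ω => (X ω, W ω)) := by
  unfold entH
  rw [neg_le_neg_iff]
  calc ∑ ab : α × β, pr μ (fun ω => (X ω, W ω)) ab * Real.logb 2 (pr μ (fun ω => (X ω, W ω)) ab)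
      ≤ ∑ ab : α × β, pr μ (fun ω => (X ω, W ω)) ab * Real.logb 2 (pr μ W ab.2) := by
        apply Finset.sum_le_sum
        intro ab _
        rcases eq_or_lt_of_le (pr_nonneg hμ (fun ω => (X ω, W ω)) ab) with h0 | h0
        · rw [← h0]; simp
        · apply mul_le_mul_of_nonneg_left _ h0.le
          apply Real.logb_le_logb_of_le (by norm_num) h0
          rw [show ab = (ab.1, ab.2) from rfl] at h0 ⊢
          exact pr_pair_le_snd hμ X W ab.1 ab.2
    _ = ∑ b, pr μ W b * Real.logb 2 (pr μ W b) := sum_pair_weight_snd (μ := μ) X W (fun b => Real.logb 2 (pr μ W b))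

lemma condH_nonneg (hμ : IsPMF μ) {α β : Type*} [Fintype α] [DecidableEq α]
    [Fintype β] [DecidableEq β] (X : Ω → α) (W : Ω → β) :
    0 ≤ condH μ X W := by
  have := entH_pair_ge_snd hμ X W
  unfold condH
  linarith

/-- Subadditivity: `H(X,W) ≤ H(X) + H(W)`. -/
lemma entH_pair_le (hμ : IsPMF μ) {α β : Type*} [Fintype α] [DecidableEq α]
    [Fintype β] [DecidableEq β] (X : Ω → α) (W : Ω → β) :
    entH μ (fun ω => (X ω, W ω)) ≤ entH μ X + entH μ W := by
  have hg := gibbs (fun ab : α × β => pr μ (fun ω => (X ω, W ω)) ab)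
      (fun ab : α × β => pr μ X ab.1 * pr μ W ab.2)
      (fun ab => pr_nonneg hμ _ ab)
      (fun ab => mul_nonneg (pr_nonneg hμ _ _) (pr_nonneg hμ _ _))
      ?_ ?_
  · have hL : ∑ ab : α × β, pr μ (fun ω => (X ω, W ω)) ab
        * Real.logb 2 (pr μ X ab.1 * pr μ W ab.2)
        = ∑ ab : α × β, pr μ (fun ω => (X ω, W ω)) ab
          * (Real.logb 2 (pr μ X ab.1) + Real.logb 2 (pr μ W ab.2)) := by
      apply Finset.sum_congr rfl
      intro ab _
      rcases eq_or_lt_of_le (pr_nonneg hμ (fun ω => (X ω, W ω)) ab) with h0 | h0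
      · rw [← h0]; ring
      · have h1 : (0:ℝ) < pr μ X ab.1 :=
          lt_of_lt_of_le h0 (by rw [show ab = (ab.1, ab.2) from rfl] at h0 ⊢; exact pr_pair_le_fst hμ X W ab.1 ab.2)
        have h2 : (0:ℝ) < pr μ W ab.2 :=
          lt_of_lt_of_le h0 (by rw [show ab = (ab.1, ab.2) from rfl] at h0 ⊢; exact pr_pair_le_snd hμ X W ab.1 ab.2)
        rw [Real.logb_mul (ne_of_gt h1) (ne_of_gt h2)]
    rw [hL] at hg
    have hsplit : ∑ ab : α × β, pr μ (fun ω => (X ω, W ω)) ab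
          * (Real.logb 2 (pr μ X ab.1) + Real.logb 2 (pr μ W ab.2))
        = (∑ a, pr μ X a * Real.logb 2 (pr μ X a))
          + ∑ b, pr μ W b * Real.logb 2 (pr μ W b) := by
      rw [show ∀ f g : α × β → ℝ, (∑ ab : α × β, pr μ (fun ω => (X ω, W ω)) ab * (f ab + g ab))
          = (∑ ab : α × β, pr μ (fun ω => (X ω, W ω)) ab * f ab)
            + ∑ ab : α × β, pr μ (fun ω => (X ω, W ω)) ab * g ab from by
        intro f g
        rw [← Finset.sum_add_distrib]
        apply Finset.sum_congr rfl
        intro ab _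
        ring]
      rw [sum_pair_weight_fst X W (fun a => Real.logb 2 (pr μ X a)),
        sum_pair_weight_snd X W (fun b => Real.logb 2 (pr μ W b))]
    rw [hsplit] at hg
    unfold entH
    linarith
  · intro ab hab
    have h1 : (0:ℝ) < pr μ (fun ω => (X ω, W ω)) ab :=
      lt_of_le_of_ne (pr_nonneg hμ _ _) (Ne.symm hab)
    have h2 : (0:ℝ) < pr μ X ab.1 :=
      lt_of_lt_of_le h1 (by rw [show ab = (ab.1, ab.2) from rfl] at h1 ⊢; exact pr_pair_le_fst hμ X W ab.1 ab.2)
    have h3 : (0:ℝ) < pr μ W ab.2 :=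
      lt_of_lt_of_le h1 (by rw [show ab = (ab.1, ab.2) from rfl] at h1 ⊢; exact pr_pair_le_snd hμ X W ab.1 ab.2)
    positivity
  · rw [Fintype.sum_prod_type]
    simp_rw [← Finset.mul_sum]
    rw [← Finset.sum_mul, pr_sum hμ, pr_sum hμ, pr_sum hμ]
    norm_num

lemma condH_le_entH (hμ : IsPMF μ) {α β : Type*} [Fintype α] [DecidableEq α]
    [Fintype β] [DecidableEq β] (X : Ω → α) (W : Ω → β) :
    condH μ X W ≤ entH μ X := by
  have := entH_pair_le hμ X W
  unfold condH
  linarith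

/-- Independence gives additivity of entropy. -/
lemma entH_pair_of_indep (hμ : IsPMF μ) {α β : Type*} [Fintype α] [DecidableEq α]
    [Fintype β] [DecidableEq β] {X : Ω → α} {W : Ω → β}
    (h : IndepRV μ X W) :
    entH μ (fun ω => (X ω, W ω)) = entH μ X + entH μ W := by
  unfold entH
  have : ∀ ab : α × β, pr μ (fun ω => (X ω, W ω)) ab = pr μ X ab.1 * pr μ W ab.2 := by
    intro ab
    rw [show ab = (ab.1, ab.2) from rfl]
    exact h ab.1 ab.2
  simp_rw [this]
  have key : ∑ ab : α × β, pr μ X ab.1 * pr μ W ab.2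
      * Real.logb 2 (pr μ X ab.1 * pr μ W ab.2)
      = ∑ ab : α × β, (pr μ X ab.1 * pr μ W ab.2 * Real.logb 2 (pr μ X ab.1)
        + pr μ X ab.1 * pr μ W ab.2 * Real.logb 2 (pr μ W ab.2)) := by
    apply Finset.sum_congr rfl
    intro ab _
    rcases eq_or_ne (pr μ X ab.1) 0 with h1 | h1
    · simp [h1]
    · rcases eq_or_ne (pr μ W ab.2) 0 with h2 | h2
      · simp [h2]
      · rw [Real.logb_mul h1 h2]; ring
  rw [key, Finset.sum_add_distrib, Fintype.sum_prod_type, Fintype.sum_prod_type]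
  have e1 : ∑ a, ∑ b, pr μ X a * pr μ W b * Real.logb 2 (pr μ X a)
      = ∑ a, pr μ X a * Real.logb 2 (pr μ X a) := by
    apply Finset.sum_congr rfl
    intro a _
    rw [show ∀ c : β → ℝ, (∑ b, pr μ X a * c b * Real.logb 2 (pr μ X a))
        = (∑ b, c b) * (pr μ X a * Real.logb 2 (pr μ X a)) from by
      intro c; rw [Finset.sum_mul]; apply Finset.sum_congr rfl; intro b _; ring]
    rw [pr_sum hμ]; ring
  have e2 : ∑ a, ∑ b, pr μ X a * pr μ W b * Real.logb 2 (pr μ W b)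
      = ∑ b, pr μ W b * Real.logb 2 (pr μ W b) := by
    rw [Finset.sum_comm]
    apply Finset.sum_congr rfl
    intro b _
    rw [show (∑ a, pr μ X a * pr μ W b * Real.logb 2 (pr μ W b))
        = (∑ a, pr μ X a) * (pr μ W b * Real.logb 2 (pr μ W b)) from by
      rw [Finset.sum_mul]; apply Finset.sum_congr rfl; intro a _; ring]
    rw [pr_sum hμ]; ring
  rw [e1, e2]
  ring

lemma condH_of_indep (hμ : IsPMF μ) {α β : Type*} [Fintype α] [DecidableEq α]
    [Fintype β] [DecidableEq β] {X : Ω → α} {W : Ω → β}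
    (h : IndepRV μ X W) : condH μ X W = entH μ X := by
  unfold condH
  rw [entH_pair_of_indep hμ h]
  ring

section Triple
variable {a b c : Type*} [Fintype a] [DecidableEq a] [Fintype b] [DecidableEq b]
  [Fintype c] [DecidableEq c] (X : Ω → a) (U : Ω → b) (Z : Ω → c)

lemma pr_t_xz (x : a) (z : c) :
    pr μ (fun ω => (X ω, Z ω)) (x, z) = ∑ u, pr μ (fun ω => (X ω, U ω, Z ω)) (x, u, z) := by
  unfold pr
  rw [Finset.sum_comm]
  apply Finset.sum_congr rfl
  intro ω _
  simp [Prod.ext_iff, ite_and, Finset.sum_ite_eq]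

lemma pr_t_uz (u : b) (z : c) :
    pr μ (fun ω => (U ω, Z ω)) (u, z) = ∑ x, pr μ (fun ω => (X ω, U ω, Z ω)) (x, u, z) := by
  unfold pr
  rw [Finset.sum_comm]
  apply Finset.sum_congr rfl
  intro ω _
  simp [Prod.ext_iff, ite_and, Finset.sum_ite_eq]

lemma pr_t_z (z : c) :
    pr μ Z z = ∑ x, ∑ u, pr μ (fun ω => (X ω, U ω, Z ω)) (x, u, z) := by
  have h1 : ∀ ω : Ω, (if Z ω = z then μ ω else 0)
      = ∑ x, ∑ u, (if (X ω, U ω, Z ω) = (x, u, z) then μ ω else 0) := by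
    intro ω
    simp [Prod.ext_iff, ite_and, Finset.sum_ite_eq]
  unfold pr
  simp_rw [h1]
  rw [Finset.sum_comm]
  apply Finset.sum_congr rfl
  intro x _
  rw [Finset.sum_comm]

lemma sum_t_weight_xz (L : a → c → ℝ) :
    ∑ t : a × b × c, pr μ (fun ω => (X ω, U ω, Z ω)) t * L t.1 t.2.2
      = ∑ x, ∑ z, pr μ (fun ω => (X ω, Z ω)) (x, z) * L x z := by
  rw [Fintype.sum_prod_type]
  apply Finset.sum_congr rfl
  intro x _
  rw [Fintype.sum_prod_type, Finset.sum_comm]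
  apply Finset.sum_congr rfl
  intro z _
  show ∑ u, pr μ (fun ω => (X ω, U ω, Z ω)) (x, u, z) * L x z = _
  rw [← Finset.sum_mul, ← pr_t_xz]

lemma sum_t_weight_uz (L : b → c → ℝ) :
    ∑ t : a × b × c, pr μ (fun ω => (X ω, U ω, Z ω)) t * L t.2.1 t.2.2
      = ∑ u, ∑ z, pr μ (fun ω => (U ω, Z ω)) (u, z) * L u z := by
  rw [Fintype.sum_prod_type, Finset.sum_comm, Fintype.sum_prod_type]
  apply Finset.sum_congr rfl
  intro u _
  apply Finset.sum_congr rfl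
  intro z _
  show ∑ x, pr μ (fun ω => (X ω, U ω, Z ω)) (x, u, z) * L u z = _
  rw [← Finset.sum_mul, ← pr_t_uz]

lemma sum_t_weight_z (L : c → ℝ) :
    ∑ t : a × b × c, pr μ (fun ω => (X ω, U ω, Z ω)) t * L t.2.2
      = ∑ z, pr μ Z z * L z := by
  have h1 : ∑ t : a × b × c, pr μ (fun ω => (X ω, U ω, Z ω)) t * L t.2.2
      = ∑ x, ∑ u, ∑ z, pr μ (fun ω => (X ω, U ω, Z ω)) (x, u, z) * L z := by
    rw [Fintype.sum_prod_type]
    apply Finset.sum_congr rfl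
    intro x _
    rw [Fintype.sum_prod_type]
  rw [h1]
  simp_rw [pr_t_z X U Z, Finset.sum_mul]
  calc ∑ x, ∑ u, ∑ z, pr μ (fun ω => (X ω, U ω, Z ω)) (x, u, z) * L z
      = ∑ x, ∑ z, ∑ u, pr μ (fun ω => (X ω, U ω, Z ω)) (x, u, z) * L z :=
        Finset.sum_congr rfl (fun x _ => Finset.sum_comm)
    _ = ∑ z, ∑ x, ∑ u, pr μ (fun ω => (X ω, U ω, Z ω)) (x, u, z) * L z :=
        Finset.sum_comm

lemma pr_t_le_xz (hμ : IsPMF μ) (x : a) (u : b) (z : c) :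
    pr μ (fun ω => (X ω, U ω, Z ω)) (x, u, z) ≤ pr μ (fun ω => (X ω, Z ω)) (x, z) := by
  rw [pr_t_xz X U Z]
  exact Finset.single_le_sum (f := fun u => pr μ (fun ω => (X ω, U ω, Z ω)) (x, u, z))
    (fun v _ => pr_nonneg hμ _ _) (Finset.mem_univ u)

lemma pr_t_le_uz (hμ : IsPMF μ) (x : a) (u : b) (z : c) :
    pr μ (fun ω => (X ω, U ω, Z ω)) (x, u, z) ≤ pr μ (fun ω => (U ω, Z ω)) (u, z) := by
  rw [pr_t_uz X U Z]
  exact Finset.single_le_sum (f := fun x => pr μ (fun ω => (X ω, U ω, Z ω)) (x, u, z))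
    (fun v _ => pr_nonneg hμ _ _) (Finset.mem_univ x)

lemma pr_t_le_z (hμ : IsPMF μ) (x : a) (u : b) (z : c) :
    pr μ (fun ω => (X ω, U ω, Z ω)) (x, u, z) ≤ pr μ Z z := by
  rw [pr_t_z X U Z]
  calc pr μ (fun ω => (X ω, U ω, Z ω)) (x, u, z)
      ≤ ∑ u, pr μ (fun ω => (X ω, U ω, Z ω)) (x, u, z) :=
        Finset.single_le_sum (f := fun u => pr μ (fun ω => (X ω, U ω, Z ω)) (x, u, z))
          (fun v _ => pr_nonneg hμ _ _) (Finset.mem_univ u)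
    _ ≤ ∑ x, ∑ u, pr μ (fun ω => (X ω, U ω, Z ω)) (x, u, z) :=
        Finset.single_le_sum (f := fun x => ∑ u, pr μ (fun ω => (X ω, U ω, Z ω)) (x, u, z))
          (fun v _ => Finset.sum_nonneg (fun w _ => pr_nonneg hμ _ _)) (Finset.mem_univ x)

/-- Submodularity: `H(X,U,Z) + H(Z) ≤ H(X,Z) + H(U,Z)`. -/
lemma entH_submod (hμ : IsPMF μ) :
    entH μ (fun ω => (X ω, U ω, Z ω)) + entH μ Z
      ≤ entH μ (fun ω => (X ω, Z ω)) + entH μ (fun ω => (U ω, Z ω)) := by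
  set q : a × b × c → ℝ := fun t =>
    pr μ (fun ω => (X ω, Z ω)) (t.1, t.2.2) * pr μ (fun ω => (U ω, Z ω)) (t.2.1, t.2.2)
      / pr μ Z t.2.2 with hq_def
  have hg := gibbs (fun t : a × b × c => pr μ (fun ω => (X ω, U ω, Z ω)) t) q
    (fun t => pr_nonneg hμ _ t)
    (fun t => div_nonneg (mul_nonneg (pr_nonneg hμ _ _) (pr_nonneg hμ _ _)) (pr_nonneg hμ _ _))
    ?_ ?_
  · -- rewrite Σ p logb q
    have hL : ∑ t : a × b × c, pr μ (fun ω => (X ω, U ω, Z ω)) t * Real.logb 2 (q t)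
        = (∑ t : a × b × c, pr μ (fun ω => (X ω, U ω, Z ω)) t
            * Real.logb 2 (pr μ (fun ω => (X ω, Z ω)) (t.1, t.2.2)))
          + (∑ t : a × b × c, pr μ (fun ω => (X ω, U ω, Z ω)) t
            * Real.logb 2 (pr μ (fun ω => (U ω, Z ω)) (t.2.1, t.2.2)))
          - ∑ t : a × b × c, pr μ (fun ω => (X ω, U ω, Z ω)) t * Real.logb 2 (pr μ Z t.2.2) := by
      rw [← Finset.sum_add_distrib, ← Finset.sum_sub_distrib]
      apply Finset.sum_congr rfl
      intro t _
      rcases eq_or_lt_of_le (pr_nonneg hμ (fun ω => (X ω, U ω, Z ω)) t) with h0 | h0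
      · rw [← h0]; ring
      · obtain ⟨x, u, z⟩ := t
        have h1 := lt_of_lt_of_le h0 (pr_t_le_xz X U Z hμ x u z)
        have h2 := lt_of_lt_of_le h0 (pr_t_le_uz X U Z hμ x u z)
        have h3 := lt_of_lt_of_le h0 (pr_t_le_z X U Z hμ x u z)
        rw [hq_def]
        show pr μ (fun ω => (X ω, U ω, Z ω)) (x, u, z)
            * Real.logb 2 (pr μ (fun ω => (X ω, Z ω)) (x, z) * pr μ (fun ω => (U ω, Z ω)) (u, z)
              / pr μ Z z) = _
        rw [Real.logb_div (by positivity) (ne_of_gt h3),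
          Real.logb_mul (ne_of_gt h1) (ne_of_gt h2)]
        ring
    rw [hL] at hg
    have e1 : ∑ t : a × b × c, pr μ (fun ω => (X ω, U ω, Z ω)) t
        * Real.logb 2 (pr μ (fun ω => (X ω, Z ω)) (t.1, t.2.2))
        = -entH μ (fun ω => (X ω, Z ω)) := by
      rw [sum_t_weight_xz X U Z (fun x z => Real.logb 2 (pr μ (fun ω => (X ω, Z ω)) (x, z)))]
      unfold entH
      rw [neg_neg, Fintype.sum_prod_type]
    have e2 : ∑ t : a × b × c, pr μ (fun ω => (X ω, U ω, Z ω)) t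
        * Real.logb 2 (pr μ (fun ω => (U ω, Z ω)) (t.2.1, t.2.2))
        = -entH μ (fun ω => (U ω, Z ω)) := by
      rw [sum_t_weight_uz X U Z (fun u z => Real.logb 2 (pr μ (fun ω => (U ω, Z ω)) (u, z)))]
      unfold entH
      rw [neg_neg, Fintype.sum_prod_type]
    have e3 : ∑ t : a × b × c, pr μ (fun ω => (X ω, U ω, Z ω)) t
        * Real.logb 2 (pr μ Z t.2.2) = -entH μ Z := by
      rw [sum_t_weight_z X U Z (fun z => Real.logb 2 (pr μ Z z))]
      unfold entH
      rw [neg_neg]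
    have e4 : ∑ t : a × b × c, pr μ (fun ω => (X ω, U ω, Z ω)) t
        * Real.logb 2 (pr μ (fun ω => (X ω, U ω, Z ω)) t)
        = -entH μ (fun ω => (X ω, U ω, Z ω)) := by
      unfold entH
      rw [neg_neg]
    rw [e1, e2, e3, e4] at hg
    linarith
  · -- p ≠ 0 → q ≠ 0
    intro t ht
    have h0 : 0 < pr μ (fun ω => (X ω, U ω, Z ω)) t :=
      lt_of_le_of_ne (pr_nonneg hμ _ _) (Ne.symm ht)
    obtain ⟨x, u, z⟩ := t
    have h1 := lt_of_lt_of_le h0 (pr_t_le_xz X U Z hμ x u z)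
    have h2 := lt_of_lt_of_le h0 (pr_t_le_uz X U Z hμ x u z)
    have h3 := lt_of_lt_of_le h0 (pr_t_le_z X U Z hμ x u z)
    show pr μ (fun ω => (X ω, Z ω)) (x, z) * pr μ (fun ω => (U ω, Z ω)) (u, z) / pr μ Z z ≠ 0
    positivity
  · -- ∑ q ≤ ∑ p
    rw [pr_sum hμ]
    have hq1 : ∑ t : a × b × c, q t
        = ∑ z, pr μ Z z * pr μ Z z / pr μ Z z := by
      rw [Fintype.sum_prod_type, Finset.sum_comm, Fintype.sum_prod_type, Finset.sum_comm]
      apply Finset.sum_congr rfl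
      intro z _
      show ∑ u, ∑ x, pr μ (fun ω => (X ω, Z ω)) (x, z) * pr μ (fun ω => (U ω, Z ω)) (u, z)
          / pr μ Z z = _
      have : ∀ u : b, ∑ x, pr μ (fun ω => (X ω, Z ω)) (x, z) * pr μ (fun ω => (U ω, Z ω)) (u, z)
          / pr μ Z z = pr μ Z z * pr μ (fun ω => (U ω, Z ω)) (u, z) / pr μ Z z := by
        intro u
        rw [show ∀ r s : ℝ, (∑ x, pr μ (fun ω => (X ω, Z ω)) (x, z) * r / s)
            = (∑ x, pr μ (fun ω => (X ω, Z ω)) (x, z)) * r / s from by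
          intro r s
          rw [Finset.sum_mul, Finset.sum_div], pr_pair_snd X Z z]
      simp_rw [this]
      rw [show ∀ s : ℝ, (∑ u, pr μ Z z * pr μ (fun ω => (U ω, Z ω)) (u, z) / s)
          = pr μ Z z * (∑ u, pr μ (fun ω => (U ω, Z ω)) (u, z)) / s from by
        intro s
        rw [Finset.mul_sum, Finset.sum_div], pr_pair_snd U Z z]
    rw [hq1]
    have : ∀ z : c, pr μ Z z * pr μ Z z / pr μ Z z ≤ pr μ Z z := by
      intro z
      rcases eq_or_ne (pr μ Z z) 0 with h | h
      · simp [h]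
      · rw [mul_div_assoc, div_self h, mul_one]
    calc ∑ z, pr μ Z z * pr μ Z z / pr μ Z z ≤ ∑ z, pr μ Z z :=
          Finset.sum_le_sum (fun z _ => this z)
      _ = 1 := pr_sum hμ Z

end Triple

lemma pr_ne_zero_exists {τ : Type*} [DecidableEq τ] {Z : Ω → τ} {a : τ}
    (h : pr μ Z a ≠ 0) : ∃ ω, Z ω = a := by
  obtain ⟨ω, _, hω⟩ := Finset.exists_ne_zero_of_sum_ne_zero h
  refine ⟨ω, ?_⟩
  by_contra hc
  simp [hc] at hω

/-- Entropy only depends on the random variable up to mutual determination. -/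
lemma entH_congr {τ τ' : Type*} [Fintype τ] [DecidableEq τ] [Fintype τ'] [DecidableEq τ']
    (Z : Ω → τ) (Z' : Ω → τ') (φ : τ → τ') (ψ : τ' → τ)
    (hφ : ∀ ω, φ (Z ω) = Z' ω) (hψ : ∀ ω, ψ (Z' ω) = Z ω) :
    entH μ Z' = entH μ Z := by
  have hZ : ∀ a, pr μ Z a ≠ 0 → pr μ Z' (φ a) = pr μ Z a ∧ ψ (φ a) = a := by
    intro a ha
    obtain ⟨ω₀, hω₀⟩ := pr_ne_zero_exists ha
    have hpsiphi : ψ (φ a) = a := by rw [← hω₀, hφ, hψ]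
    refine ⟨?_, hpsiphi⟩
    unfold pr
    apply Finset.sum_congr rfl
    intro ω _
    congr 1
    simp only [eq_iff_iff]
    constructor
    · intro h
      have := congrArg ψ h
      rwa [hψ, hpsiphi] at this
    · intro h
      rw [← hφ, h]
  have hZ' : ∀ a', pr μ Z' a' ≠ 0 → pr μ Z (ψ a') = pr μ Z' a' ∧ φ (ψ a') = a' := by
    intro a' ha'
    obtain ⟨ω₀, hω₀⟩ := pr_ne_zero_exists ha'
    have hphipsi : φ (ψ a') = a' := by rw [← hω₀, hψ, hφ]
    refine ⟨?_, hphipsi⟩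
    unfold pr
    apply Finset.sum_congr rfl
    intro ω _
    congr 1
    simp only [eq_iff_iff]
    constructor
    · intro h
      have := congrArg φ h
      rwa [hφ, hphipsi] at this
    · intro h
      rw [← hψ, h]
  unfold entH
  congr 1
  rw [show (∑ a', pr μ Z' a' * Real.logb 2 (pr μ Z' a'))
      = ∑ a' ∈ Finset.univ.filter (fun a' => pr μ Z' a' ≠ 0),
          pr μ Z' a' * Real.logb 2 (pr μ Z' a') from by
    symm
    apply Finset.sum_subset (Finset.filter_subset _ _)
    intro a' _ ha'
    simp only [Finset.mem_filter, Finset.mem_univ, true_and, not_not] at ha'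
    simp [ha']]
  rw [show (∑ a, pr μ Z a * Real.logb 2 (pr μ Z a))
      = ∑ a ∈ Finset.univ.filter (fun a => pr μ Z a ≠ 0),
          pr μ Z a * Real.logb 2 (pr μ Z a) from by
    symm
    apply Finset.sum_subset (Finset.filter_subset _ _)
    intro a _ ha
    simp only [Finset.mem_filter, Finset.mem_univ, true_and, not_not] at ha
    simp [ha]]
  apply Finset.sum_nbij' ψ φ
  · intro a' ha'
    simp only [Finset.mem_filter, Finset.mem_univ, true_and] at ha' ⊢
    rw [(hZ' a' ha').1]
    exact ha'
  · intro a ha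
    simp only [Finset.mem_filter, Finset.mem_univ, true_and] at ha ⊢
    rw [(hZ a ha).1]
    exact ha
  · intro a' ha'
    simp only [Finset.mem_filter, Finset.mem_univ, true_and] at ha'
    exact (hZ' a' ha').2
  · intro a ha
    simp only [Finset.mem_filter, Finset.mem_univ, true_and] at ha
    exact (hZ a ha).2
  · intro a' ha'
    simp only [Finset.mem_filter, Finset.mem_univ, true_and] at ha'
    rw [(hZ' a' ha').1]

/-- Conditional entropy only depends on the conditioning variable up to mutual
determination. -/
lemma condH_congr_right {σ τ τ' : Type*} [Fintype σ] [DecidableEq σ]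
    [Fintype τ] [DecidableEq τ] [Fintype τ'] [DecidableEq τ']
    (V : Ω → σ) (Z : Ω → τ) (Z' : Ω → τ') (φ : τ → τ') (ψ : τ' → τ)
    (hφ : ∀ ω, φ (Z ω) = Z' ω) (hψ : ∀ ω, ψ (Z' ω) = Z ω) :
    condH μ V Z' = condH μ V Z := by
  unfold condH
  rw [entH_congr Z Z' φ ψ hφ hψ,
    entH_congr (fun ω => (V ω, Z ω)) (fun ω => (V ω, Z' ω))
      (Prod.map id φ) (Prod.map id ψ)
      (fun ω => by simp [Prod.map, hφ ω]) (fun ω => by simp [Prod.map, hψ ω])]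

/-- Symmetry of conditional mutual information, in difference form. -/
lemma condH_diff_symm {σ τ ρ : Type*} [Fintype σ] [DecidableEq σ]
    [Fintype τ] [DecidableEq τ] [Fintype ρ] [DecidableEq ρ]
    (A : Ω → σ) (X : Ω → τ) (W : Ω → ρ) :
    condH μ A W - condH μ A (fun ω => (X ω, W ω))
      = condH μ X W - condH μ X (fun ω => (A ω, W ω)) := by
  unfold condH
  have h3 : entH μ (fun ω => (X ω, A ω, W ω)) = entH μ (fun ω => (A ω, X ω, W ω)) :=
    entH_congr _ _ (fun t => (t.2.1, t.1, t.2.2)) (fun t => (t.2.1, t.1, t.2.2))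
      (fun ω => rfl) (fun ω => rfl)
  rw [h3]
  ring

/-- Conditioning on more variables reduces conditional entropy. -/
lemma condH_cond_pair_le (hμ : IsPMF μ) {σ τ ρ : Type*} [Fintype σ] [DecidableEq σ]
    [Fintype τ] [DecidableEq τ] [Fintype ρ] [DecidableEq ρ]
    (A : Ω → σ) (U : Ω → τ) (Z : Ω → ρ) :
    condH μ A (fun ω => (U ω, Z ω)) ≤ condH μ A Z := by
  have := entH_submod (μ := μ) A U Z hμ
  unfold condH
  linarith

end Lemmas

/-- if for each `i`, `H(X_i | A, Q, X_0, ..., X_{i-1}, Y_0, ..., Y_i) = 0`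
and `X_i` is independent of `(Q, X_0, ..., X_{i-1}, Y_0, ..., Y_i)`, then
`H(A) ≥ ∑_{i=0}^{n-1} H(X_i)`. -/
theorem stmt8 {Ω α β γ δ : Type*} [Fintype Ω]
    [Fintype α] [DecidableEq α] [Fintype β] [DecidableEq β]
    [Fintype γ] [DecidableEq γ] [Fintype δ] [DecidableEq δ]
    (n : ℕ) (μ : Ω → ℝ) (hμ : IsPMF μ)
    (A : Ω → γ) (Q : Ω → α) (X : Fin n → Ω → δ) (Y : Fin n → Ω → β)
    (hrec : ∀ i : Fin n,
      condH μ (X i) (fun ω =>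
        (A ω, Q ω,
         fun j : Fin i.val => X (Fin.castLE i.isLt.le j) ω,
         fun j : Fin (i.val + 1) => Y (Fin.castLE i.isLt j) ω)) = 0)
    (hind : ∀ i : Fin n,
      IndepRV μ (X i) (fun ω =>
        (Q ω,
         fun j : Fin i.val => X (Fin.castLE i.isLt.le j) ω,
         fun j : Fin (i.val + 1) => Y (Fin.castLE i.isLt j) ω))) :
    entH μ A ≥ ∑ i : Fin n, entH μ (X i) := by

  rcases Nat.eq_zero_or_pos n with hn | hn
  · subst hn
    simpa using entH_nonneg hμ A
  have hΩ : Nonempty Ω := by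
    rcases isEmpty_or_nonempty Ω with h | h
    · exfalso
      have := hμ.2
      simp at this
    · exact h
  obtain ⟨ω₀⟩ := hΩ
  letI iOd : DecidableEq (Fin n → Option δ) := inferInstance
  letI iOb : DecidableEq (Fin n → Option β) := inferInstance
  letI iP : DecidableEq ((Fin n → Option δ) × (Fin n → Option β)) := instDecidableEqProd
  letI iS : DecidableEq (α × (Fin n → Option δ) × (Fin n → Option β)) := instDecidableEqProd
  letI iGS : DecidableEq (γ × α × (Fin n → Option δ) × (Fin n → Option β)) := instDecidableEqProd
  letI iDS : DecidableEq (δ × α × (Fin n → Option δ) × (Fin n → Option β)) := instDecidableEqProd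
  letI iBDS : DecidableEq (β × δ × α × (Fin n → Option δ) × (Fin n → Option β)) :=
    instDecidableEqProd
  set d : δ := X ⟨0, hn⟩ ω₀ with hd
  set e : β := Y ⟨0, hn⟩ ω₀ with he
  set V : ℕ → Ω → α × (Fin n → Option δ) × (Fin n → Option β) := fun k ω =>
    (Q ω, fun j => if j.val < k then some (X j ω) else none,
          fun j => if j.val ≤ k then some (Y j ω) else none) with hV
  -- K1 : conditional entropy of X_k given V k is full, by independence
  have K1 : ∀ (k : ℕ) (hk : k < n), condH μ (X ⟨k, hk⟩) (V k) = entH μ (X ⟨k, hk⟩) := by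
    intro k hk
    have h1 := condH_of_indep hμ (hind ⟨k, hk⟩)
    rw [← h1]
    apply condH_congr_right (μ := μ) (X ⟨k, hk⟩) _ (V k)
      (φ := fun t : α × (Fin k → δ) × (Fin (k + 1) → β) =>
        (t.1,
         fun j : Fin n => if h : j.val < k then some (t.2.1 ⟨j.val, h⟩) else none,
         fun j : Fin n => if h : j.val ≤ k then some (t.2.2 ⟨j.val, Nat.lt_succ_of_le h⟩)
           else none))
      (ψ := fun t : α × (Fin n → Option δ) × (Fin n → Option β) =>
        (t.1,
         fun j : Fin k => (t.2.1 ⟨j.val, j.isLt.trans hk⟩).getD d,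
         fun j : Fin (k + 1) => (t.2.2 ⟨j.val, lt_of_lt_of_le j.isLt hk⟩).getD e))
    · intro ω
      refine Prod.ext rfl (Prod.ext ?_ ?_)
      · funext j
        dsimp only [V]
        split_ifs with h <;> rfl
      · funext j
        dsimp only [V]
        split_ifs with h <;> rfl
    · intro ω
      refine Prod.ext rfl (Prod.ext ?_ ?_)
      · funext j
        dsimp only [V]
        rw [if_pos j.isLt]
        rfl
      · funext j
        dsimp only [V]
        rw [if_pos (Nat.lt_succ_iff.mp j.isLt)]
        rfl
  -- K2 : X_k is recoverable from A and V k
  have K2 : ∀ (k : ℕ) (hk : k < n),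
      condH μ (X ⟨k, hk⟩) (fun ω => (A ω, V k ω)) = 0 := by
    intro k hk
    rw [← hrec ⟨k, hk⟩]
    apply condH_congr_right (μ := μ) (X ⟨k, hk⟩) _ (fun ω => (A ω, V k ω))
      (φ := fun t : γ × α × (Fin k → δ) × (Fin (k + 1) → β) =>
        (t.1,
         (t.2.1,
          fun j : Fin n => if h : j.val < k then some (t.2.2.1 ⟨j.val, h⟩) else none,
          fun j : Fin n => if h : j.val ≤ k then some (t.2.2.2 ⟨j.val, Nat.lt_succ_of_le h⟩)
            else none)))
      (ψ := fun t : γ × α × (Fin n → Option δ) × (Fin n → Option β) =>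
        (t.1, t.2.1,
         fun j : Fin k => (t.2.2.1 ⟨j.val, j.isLt.trans hk⟩).getD d,
         fun j : Fin (k + 1) => (t.2.2.2 ⟨j.val, lt_of_lt_of_le j.isLt hk⟩).getD e))
    · intro ω
      refine Prod.ext rfl (Prod.ext rfl (Prod.ext ?_ ?_))
      · funext j
        dsimp only [V]
        split_ifs with h <;> rfl
      · funext j
        dsimp only [V]
        split_ifs with h <;> rfl
    · intro ω
      refine Prod.ext rfl (Prod.ext rfl (Prod.ext ?_ ?_))
      · funext j
        dsimp only [V]
        rw [if_pos j.isLt]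
        rfl
      · funext j
        dsimp only [V]
        rw [if_pos (Nat.lt_succ_iff.mp j.isLt)]
        rfl
  -- K3 : conditioning on V (k+1) is finer than on (X_k, V k)
  have K3 : ∀ (k : ℕ) (hk : k < n),
      condH μ A (V (k + 1)) ≤ condH μ A (fun ω => (X ⟨k, hk⟩ ω, V k ω)) := by
    intro k hk
    rcases lt_or_ge (k + 1) n with hk1 | hk1
    · -- V (k+1) ≅ (Y_{k+1}, X_k, V k)
      have hcongr : condH μ A (V (k + 1))
          = condH μ A (fun ω => (Y ⟨k + 1, hk1⟩ ω, X ⟨k, hk⟩ ω, V k ω)) := by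
        apply condH_congr_right (μ := μ) A _ (V (k + 1))
          (φ := fun t : β × δ × α × (Fin n → Option δ) × (Fin n → Option β) =>
            (t.2.2.1,
             fun j : Fin n => if j.val = k then some t.2.1 else t.2.2.2.1 j,
             fun j : Fin n => if j.val = k + 1 then some t.1 else t.2.2.2.2 j))
          (ψ := fun t : α × (Fin n → Option δ) × (Fin n → Option β) =>
            ((t.2.2 ⟨k + 1, hk1⟩).getD e, (t.2.1 ⟨k, hk⟩).getD d,
             (t.1,
              fun j : Fin n => if j.val < k then t.2.1 j else none,
              fun j : Fin n => if j.val ≤ k then t.2.2 j else none)))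
        · intro ω
          simp only [hV]
          refine Prod.ext rfl (Prod.ext ?_ ?_)
          · funext j
            dsimp only
            split_ifs <;> first
              | rfl
              | (exfalso; omega)
              | exact congrArg some (congrFun (congrArg X (Fin.ext (show k = (j : ℕ) by omega))) ω)
              | exact congrArg some (congrFun (congrArg X (Fin.ext (show (j : ℕ) = k by omega))) ω)
          · funext j
            dsimp only
            split_ifs <;> first
              | rfl
              | (exfalso; omega)
              | exact congrArg some (congrFun (congrArg Y (Fin.ext (show k + 1 = (j : ℕ) by omega))) ω)
              | exact congrArg some (congrFun (congrArg Y (Fin.ext (show (j : ℕ) = k + 1 by omega))) ω)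
        · intro ω
          simp only [hV]
          refine Prod.ext ?_ (Prod.ext ?_ (Prod.ext rfl (Prod.ext ?_ ?_)))
          · dsimp only
            split_ifs <;> first | rfl | (exfalso; omega)
          · dsimp only
            split_ifs <;> first | rfl | (exfalso; omega)
          · funext j
            dsimp only
            split_ifs <;> first | rfl | (exfalso; omega)
          · funext j
            dsimp only
            split_ifs <;> first | rfl | (exfalso; omega)
      rw [hcongr]
      apply condH_cond_pair_le hμ A (Y ⟨k + 1, hk1⟩) (fun ω => (X ⟨k, hk⟩ ω, V k ω))
    · -- k + 1 = n : V (k+1) ≅ (X_k, V k)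
      have hcongr : condH μ A (V (k + 1))
          = condH μ A (fun ω => (X ⟨k, hk⟩ ω, V k ω)) := by
        apply condH_congr_right (μ := μ) A _ (V (k + 1))
          (φ := fun t : δ × α × (Fin n → Option δ) × (Fin n → Option β) =>
            (t.2.1,
             fun j : Fin n => if j.val = k then some t.1 else t.2.2.1 j,
             t.2.2.2))
          (ψ := fun t : α × (Fin n → Option δ) × (Fin n → Option β) =>
            ((t.2.1 ⟨k, hk⟩).getD d,
             (t.1,
              fun j : Fin n => if j.val < k then t.2.1 j else none,
              fun j : Fin n => if j.val ≤ k then t.2.2 j else none)))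
        · intro ω
          simp only [hV]
          refine Prod.ext rfl (Prod.ext ?_ ?_)
          · funext j
            dsimp only
            split_ifs <;> first
              | rfl
              | (exfalso; omega)
              | exact congrArg some (congrFun (congrArg X (Fin.ext (show k = (j : ℕ) by omega))) ω)
              | exact congrArg some (congrFun (congrArg X (Fin.ext (show (j : ℕ) = k by omega))) ω)
          · funext j
            dsimp only
            have hj : j.val < n := j.isLt
            split_ifs <;> first | rfl | (exfalso; omega)
        · intro ω
          simp only [hV]
          refine Prod.ext ?_ (Prod.ext rfl (Prod.ext ?_ ?_))
          · dsimp only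
            split_ifs <;> first | rfl | (exfalso; omega)
          · funext j
            dsimp only
            split_ifs <;> first | rfl | (exfalso; omega)
          · funext j
            dsimp only
            split_ifs <;> first | rfl | (exfalso; omega)
      rw [hcongr]
  -- The descent step
  have step : ∀ (k : ℕ) (hk : k < n),
      entH μ (X ⟨k, hk⟩) + condH μ A (V (k + 1)) ≤ condH μ A (V k) := by
    intro k hk
    have hsym : condH μ A (V k) - condH μ A (fun ω => (X ⟨k, hk⟩ ω, V k ω))
        = condH μ (X ⟨k, hk⟩) (V k) - condH μ (X ⟨k, hk⟩) (fun ω => (A ω, V k ω)) :=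
      condH_diff_symm (μ := μ) A (X ⟨k, hk⟩) (V k)
    rw [K1 k hk, K2 k hk] at hsym
    have := K3 k hk
    linarith
  -- Chain the steps together
  have chain : ∀ (m k : ℕ), k + m = n →
      (∑ i ∈ Finset.univ.filter (fun i : Fin n => k ≤ i.val), entH μ (X i))
        ≤ condH μ A (V k) := by
    intro m
    induction m with
    | zero =>
      intro k hk
      have : Finset.univ.filter (fun i : Fin n => k ≤ i.val) = ∅ := by
        apply Finset.filter_false_of_mem
        intro i _
        have := i.isLt
        omega
      rw [this]
      simpa using condH_nonneg hμ A (V k)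
    | succ m ih =>
      intro k hkm
      have hk : k < n := by omega
      have hsplit : Finset.univ.filter (fun i : Fin n => k ≤ i.val)
          = insert ⟨k, hk⟩ (Finset.univ.filter (fun i : Fin n => k + 1 ≤ i.val)) := by
        ext i
        simp only [Finset.mem_filter, Finset.mem_univ, true_and, Finset.mem_insert]
        constructor
        · intro h
          rcases eq_or_ne i.val k with h2 | h2
          · left; exact Fin.ext h2
          · right; omega
        · intro h
          rcases h with h | h
          · rw [h]
          · omega
      rw [hsplit, Finset.sum_insert (by simp)]
      have hstep := step k hk
      have hih := ih (k + 1) (by omega)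
      linarith
  have h0 := chain n 0 (by omega)
  have hall : Finset.univ.filter (fun i : Fin n => 0 ≤ i.val) = Finset.univ := by
    apply Finset.filter_true_of_mem
    intro i _
    omega
  rw [hall] at h0
  have hle := condH_le_entH hμ A (V 0)
  linarith
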